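/- Let {z^k} be reflected Halpern PDHG iterates, z^{k+1} = ((k+1)/(k+2))·(2·PDHG(z^k) − z^k) + (1/(k+2))·z^0, with step-size η < 1/‖A‖₂, and assume the fixed-point set Z* := {z* : PDHG(z*) = z*} is nonempty. Then for every k ≥ 1, ‖z^k − PDHG(z^k)‖_P ≤ (1/(k+1))·dist_P(z^0, Z*), where dist_P(z^0, Z*) = inf_{z*∈Z*} ‖z^0 − z*‖_P. -/
import Mathlib


open Matrix
open scoped BigOperators

noncomputable section

/-- Euclidean norm of a vector in `ℝᵏ`. -/
def nrm {k : ℕ} (v : Fin k → ℝ) : ℝ := Real.sqrt (v ⬝ᵥ v)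

/-- Euclidean norm of a primal-dual pair `z = (x, y) ∈ ℝⁿ × ℝᵐ`. -/
def nrmP {n m : ℕ} (z : (Fin n → ℝ) × (Fin m → ℝ)) : ℝ :=
  Real.sqrt (z.1 ⬝ᵥ z.1 + z.2 ⬝ᵥ z.2)

/-- Spectral norm `‖A‖₂` of a matrix: the supremum of `‖Ax‖₂` over unit vectors `x`. -/
def specNorm {n m : ℕ} (A : Matrix (Fin m) (Fin n) ℝ) : ℝ :=
  sSup {r | ∃ x : Fin n → ℝ, nrm x = 1 ∧ r = nrm (A *ᵥ x)}

/-- Componentwise positive part `[v]⁺`. -/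
def posPt {k : ℕ} (v : Fin k → ℝ) : Fin k → ℝ := fun i => max (v i) 0

/-- The Lagrangian `L(x,y) = cᵀx − yᵀAx + bᵀy` of the standard-form LP. -/
def Lag {n m : ℕ} (A : Matrix (Fin m) (Fin n) ℝ) (b : Fin m → ℝ) (c : Fin n → ℝ)
    (x : Fin n → ℝ) (y : Fin m → ℝ) : ℝ :=
  c ⬝ᵥ x - y ⬝ᵥ (A *ᵥ x) + b ⬝ᵥ y

/-- One PDHG iteration with (equal) step-size `η`:
`x⁺ = proj_{ℝ₊ⁿ}(x + ηAᵀy − ηc)`, `y⁺ = y − ηA(2x⁺ − x) + ηb`. -/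
def pdhgStep {n m : ℕ} (A : Matrix (Fin m) (Fin n) ℝ) (b : Fin m → ℝ) (c : Fin n → ℝ)
    (η : ℝ) (z : (Fin n → ℝ) × (Fin m → ℝ)) : (Fin n → ℝ) × (Fin m → ℝ) :=
  let x' := posPt (z.1 + η • (Aᵀ *ᵥ z.2) - η • c)
  (x', z.2 - η • (A *ᵥ ((2 : ℝ) • x' - z.1)) + η • b)

/-- Quadratic form `wᵀPw` of `P = [[(1/η)Iₙ, Aᵀ], [A, (1/η)Iₘ]]`. -/
def Pquad {n m : ℕ} (A : Matrix (Fin m) (Fin n) ℝ) (η : ℝ)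
    (w : (Fin n → ℝ) × (Fin m → ℝ)) : ℝ :=
  (1 / η) * (w.1 ⬝ᵥ w.1) + 2 * (w.2 ⬝ᵥ (A *ᵥ w.1)) + (1 / η) * (w.2 ⬝ᵥ w.2)

/-- The seminorm `‖w‖_P = √(wᵀPw)`. -/
def Pnorm {n m : ℕ} (A : Matrix (Fin m) (Fin n) ℝ) (η : ℝ)
    (w : (Fin n → ℝ) × (Fin m → ℝ)) : ℝ := Real.sqrt (Pquad A η w)

/-- `σ_max(P)`: the largest eigenvalue of the symmetric matrix `P`, i.e. the
supremum of the Rayleigh quotient `wᵀPw` over unit vectors `w`. -/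
def sigmaMaxP {n m : ℕ} (A : Matrix (Fin m) (Fin n) ℝ) (η : ℝ) : ℝ :=
  sSup {r | ∃ w : (Fin n → ℝ) × (Fin m → ℝ), nrmP w = 1 ∧ r = Pquad A η w}

/-- Application of the matrix `P`: `Pw = ((1/η)w₁ + Aᵀw₂, Aw₁ + (1/η)w₂)`. -/
def Papply {n m : ℕ} (A : Matrix (Fin m) (Fin n) ℝ) (η : ℝ)
    (w : (Fin n → ℝ) × (Fin m → ℝ)) : (Fin n → ℝ) × (Fin m → ℝ) :=
  ((1 / η) • w.1 + Aᵀ *ᵥ w.2, A *ᵥ w.1 + (1 / η) • w.2)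

/-- The set `Z*` of saddle points of `L` over `Z = ℝ₊ⁿ × ℝᵐ`:
`L(x*, y) ≤ L(x*, y*) ≤ L(x, y*)` for all `(x, y) ∈ Z`. -/
def saddleSet {n m : ℕ} (A : Matrix (Fin m) (Fin n) ℝ) (b : Fin m → ℝ) (c : Fin n → ℝ) :
    Set ((Fin n → ℝ) × (Fin m → ℝ)) :=
  {z | (∀ i, 0 ≤ z.1 i) ∧
    (∀ y : Fin m → ℝ, Lag A b c z.1 y ≤ Lag A b c z.1 z.2) ∧
    (∀ x : Fin n → ℝ, (∀ i, 0 ≤ x i) → Lag A b c z.1 z.2 ≤ Lag A b c x z.2)}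

/-- Euclidean distance `dist₂(z, S)` from `z` to a set `S`. -/
def dist2 {n m : ℕ} (z : (Fin n → ℝ) × (Fin m → ℝ))
    (S : Set ((Fin n → ℝ) × (Fin m → ℝ))) : ℝ :=
  sInf ((fun w => nrmP (z - w)) '' S)

/-- `P`-seminorm distance `dist_P(z, S)` from `z` to a set `S`. -/
def distP {n m : ℕ} (A : Matrix (Fin m) (Fin n) ℝ) (η : ℝ)
    (z : (Fin n → ℝ) × (Fin m → ℝ)) (S : Set ((Fin n → ℝ) × (Fin m → ℝ))) : ℝ :=
  sInf ((fun w => Pnorm A η (z - w)) '' S)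

/-- KKT error `KKT(z) = ‖(Ax − b, [Aᵀy − c]⁺, [cᵀx − bᵀy]⁺)‖₂`. -/
def KKTerr {n m : ℕ} (A : Matrix (Fin m) (Fin n) ℝ) (b : Fin m → ℝ) (c : Fin n → ℝ)
    (z : (Fin n → ℝ) × (Fin m → ℝ)) : ℝ :=
  Real.sqrt ((A *ᵥ z.1 - b) ⬝ᵥ (A *ᵥ z.1 - b)
    + posPt (Aᵀ *ᵥ z.2 - c) ⬝ᵥ posPt (Aᵀ *ᵥ z.2 - c)
    + (max (c ⬝ᵥ z.1 - b ⬝ᵥ z.2) 0) ^ 2)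

/-- Normalized duality gap `ρ_r(z) = sup_{ẑ ∈ W_r(z)} (L(x, ŷ) − L(x̂, y)) / r`,
where `W_r(z) = {ẑ ∈ Z : ‖z − ẑ‖₂ ≤ r}`. -/
def rhoGap {n m : ℕ} (A : Matrix (Fin m) (Fin n) ℝ) (b : Fin m → ℝ) (c : Fin n → ℝ)
    (r : ℝ) (z : (Fin n → ℝ) × (Fin m → ℝ)) : ℝ :=
  sSup {g | ∃ w : (Fin n → ℝ) × (Fin m → ℝ), (∀ i, 0 ≤ w.1 i) ∧ nrmP (z - w) ≤ r ∧
    g = (Lag A b c z.1 w.2 - Lag A b c w.1 z.2) / r}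

/-- The subdifferential operator
`F(z) = {(c − Aᵀy + g, Ax − b) : g ∈ N_{ℝ₊ⁿ}(x)}`, where `N_{ℝ₊ⁿ}(x)` is the
normal cone of `ℝ₊ⁿ` at `x ∈ ℝ₊ⁿ` (the set is empty if `x ∉ ℝ₊ⁿ`). -/
def Fop {n m : ℕ} (A : Matrix (Fin m) (Fin n) ℝ) (b : Fin m → ℝ) (c : Fin n → ℝ)
    (z : (Fin n → ℝ) × (Fin m → ℝ)) : Set ((Fin n → ℝ) × (Fin m → ℝ)) :=
  {w | (∀ i, 0 ≤ z.1 i) ∧ ∃ g : Fin n → ℝ,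
    (∀ u : Fin n → ℝ, (∀ i, 0 ≤ u i) → g ⬝ᵥ (u - z.1) ≤ 0) ∧
    w = (c - Aᵀ *ᵥ z.2 + g, A *ᵥ z.1 - b)}

/-- `dist₂(0, F(z)) = inf {‖w‖₂ : w ∈ F(z)}`. -/
def distF {n m : ℕ} (A : Matrix (Fin m) (Fin n) ℝ) (b : Fin m → ℝ) (c : Fin n → ℝ)
    (z : (Fin n → ℝ) × (Fin m → ℝ)) : ℝ :=
  sInf (nrmP '' Fop A b c z)

end


noncomputable section
namespace S9

variable {n m : ℕ}

lemma dot_self_nonneg {k : ℕ} (v : Fin k → ℝ) : 0 ≤ v ⬝ᵥ v :=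
  Finset.sum_nonneg fun _ _ => mul_self_nonneg _

lemma dot_CS {k : ℕ} (f g : Fin k → ℝ) : f ⬝ᵥ g ≤ nrm f * nrm g := by
  have h2 : (f ⬝ᵥ g)^2 ≤ (f ⬝ᵥ f) * (g ⬝ᵥ g) := by
    simpa [dotProduct, sq] using Finset.sum_mul_sq_le_sq_mul_sq Finset.univ f g
  calc f ⬝ᵥ g ≤ |f ⬝ᵥ g| := le_abs_self _
    _ = Real.sqrt ((f ⬝ᵥ g)^2) := (Real.sqrt_sq_eq_abs _).symm
    _ ≤ Real.sqrt ((f ⬝ᵥ f) * (g ⬝ᵥ g)) := Real.sqrt_le_sqrt h2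
    _ = nrm f * nrm g := by rw [Real.sqrt_mul (dot_self_nonneg f)]; rfl

lemma nrm_nonneg {k : ℕ} (v : Fin k → ℝ) : 0 ≤ nrm v := Real.sqrt_nonneg _

lemma nrm_smul {k : ℕ} (r : ℝ) (v : Fin k → ℝ) : nrm (r • v) = |r| * nrm v := by
  unfold nrm
  rw [smul_dotProduct, dotProduct_smul, smul_eq_mul, smul_eq_mul, ← mul_assoc,
    Real.sqrt_mul (mul_self_nonneg r), Real.sqrt_mul_self_eq_abs r]

lemma nrm_eq_zero {k : ℕ} {v : Fin k → ℝ} (h : nrm v = 0) : v = 0 := by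
  have h1 : v ⬝ᵥ v = 0 := by
    have := (Real.sqrt_eq_zero (dot_self_nonneg v)).mp h
    exact this
  funext i
  have h2 := (Finset.sum_eq_zero_iff_of_nonneg (fun j _ => mul_self_nonneg (v j))).mp h1 i
    (Finset.mem_univ i)
  have : v i = 0 := by nlinarith [h2]
  simpa using this

lemma frob_bound (A : Matrix (Fin m) (Fin n) ℝ) (x : Fin n → ℝ) :
    nrm (A *ᵥ x) ≤ Real.sqrt (∑ i, ∑ j, (A i j)^2) * nrm x := by
  have key : (A *ᵥ x) ⬝ᵥ (A *ᵥ x) ≤ (∑ i, ∑ j, (A i j)^2) * (x ⬝ᵥ x) := by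
    have h1 : ∀ i : Fin m, (A *ᵥ x) i * (A *ᵥ x) i ≤ (∑ j, (A i j)^2) * (x ⬝ᵥ x) := by
      intro i
      have := Finset.sum_mul_sq_le_sq_mul_sq Finset.univ (fun j => A i j) x
      have hv : (A *ᵥ x) i = ∑ j, A i j * x j := rfl
      calc (A *ᵥ x) i * (A *ᵥ x) i = (∑ j, A i j * x j)^2 := by rw [hv]; ring
        _ ≤ (∑ j, (A i j)^2) * (∑ j, (x j)^2) := this
        _ = (∑ j, (A i j)^2) * (x ⬝ᵥ x) := by
            congr 1; simp [dotProduct, sq]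
    calc (A *ᵥ x) ⬝ᵥ (A *ᵥ x) = ∑ i, (A *ᵥ x) i * (A *ᵥ x) i := rfl
      _ ≤ ∑ i, (∑ j, (A i j)^2) * (x ⬝ᵥ x) := Finset.sum_le_sum fun i _ => h1 i
      _ = (∑ i, ∑ j, (A i j)^2) * (x ⬝ᵥ x) := by rw [Finset.sum_mul]
  calc nrm (A *ᵥ x) = Real.sqrt ((A *ᵥ x) ⬝ᵥ (A *ᵥ x)) := rfl
    _ ≤ Real.sqrt ((∑ i, ∑ j, (A i j)^2) * (x ⬝ᵥ x)) := Real.sqrt_le_sqrt key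
    _ = Real.sqrt (∑ i, ∑ j, (A i j)^2) * nrm x := by
        rw [Real.sqrt_mul (by positivity)]; rfl

lemma bddAbove_spec (A : Matrix (Fin m) (Fin n) ℝ) :
    BddAbove {r | ∃ x : Fin n → ℝ, nrm x = 1 ∧ r = nrm (A *ᵥ x)} := by
  refine ⟨Real.sqrt (∑ i, ∑ j, (A i j)^2), ?_⟩
  rintro r ⟨x, hx, rfl⟩
  have := frob_bound A x
  rw [hx, mul_one] at this
  exact this

lemma nrm_mulVec_le (A : Matrix (Fin m) (Fin n) ℝ) (hA : 0 ≤ specNorm A) (x : Fin n → ℝ) :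
    nrm (A *ᵥ x) ≤ specNorm A * nrm x := by
  rcases eq_or_ne (nrm x) 0 with h0 | h0
  · rw [nrm_eq_zero h0, Matrix.mulVec_zero]
    simp [nrm]
  · have hpos : 0 < nrm x := lt_of_le_of_ne (nrm_nonneg x) (Ne.symm h0)
    set u : Fin n → ℝ := (nrm x)⁻¹ • x with hu
    have hu1 : nrm u = 1 := by
      rw [hu, nrm_smul, abs_of_pos (by positivity), inv_mul_cancel₀ h0]
    have hmem : nrm (A *ᵥ u) ∈ {r | ∃ x : Fin n → ℝ, nrm x = 1 ∧ r = nrm (A *ᵥ x)} :=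
      ⟨u, hu1, rfl⟩
    have hle : nrm (A *ᵥ u) ≤ specNorm A := le_csSup (bddAbove_spec A) hmem
    have hAu : A *ᵥ u = (nrm x)⁻¹ • (A *ᵥ x) := by
      rw [hu, Matrix.mulVec_smul]
    rw [hAu, nrm_smul, abs_of_pos (by positivity)] at hle
    calc nrm (A *ᵥ x) = nrm x * ((nrm x)⁻¹ * nrm (A *ᵥ x)) := by field_simp
      _ ≤ nrm x * specNorm A := by
          exact mul_le_mul_of_nonneg_left hle (le_of_lt hpos)
      _ = specNorm A * nrm x := mul_comm _ _


variable {n m : ℕ} (A : Matrix (Fin m) (Fin n) ℝ) (η : ℝ)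

def ip (u v : (Fin n → ℝ) × (Fin m → ℝ)) : ℝ :=
  (1/η) * (u.1 ⬝ᵥ v.1) + u.2 ⬝ᵥ (A *ᵥ v.1) + v.2 ⬝ᵥ (A *ᵥ u.1) + (1/η) * (u.2 ⬝ᵥ v.2)

variable {u v w : (Fin n → ℝ) × (Fin m → ℝ)} (r : ℝ)

lemma ip_symm (u v : (Fin n → ℝ) × (Fin m → ℝ)) : ip A η u v = ip A η v u := by
  simp [ip, dotProduct_comm]; ring

lemma ip_add_left (u v w : (Fin n → ℝ) × (Fin m → ℝ)) :
    ip A η (u + v) w = ip A η u w + ip A η v w := by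
  simp [ip, Matrix.mulVec_add, add_dotProduct, dotProduct_add]; ring

lemma ip_sub_left (u v w : (Fin n → ℝ) × (Fin m → ℝ)) :
    ip A η (u - v) w = ip A η u w - ip A η v w := by
  simp [ip, Matrix.mulVec_sub, sub_dotProduct, dotProduct_sub]; ring

lemma ip_smul_left (r : ℝ) (u w : (Fin n → ℝ) × (Fin m → ℝ)) :
    ip A η (r • u) w = r * ip A η u w := by
  simp [ip, Matrix.mulVec_smul, smul_dotProduct, dotProduct_smul, smul_eq_mul]; ring

lemma ip_add_right (u v w : (Fin n → ℝ) × (Fin m → ℝ)) :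
    ip A η u (v + w) = ip A η u v + ip A η u w := by
  rw [ip_symm, ip_add_left, ip_symm A η v, ip_symm A η w]

lemma ip_sub_right (u v w : (Fin n → ℝ) × (Fin m → ℝ)) :
    ip A η u (v - w) = ip A η u v - ip A η u w := by
  rw [ip_symm, ip_sub_left, ip_symm A η v, ip_symm A η w]

lemma ip_smul_right (r : ℝ) (u w : (Fin n → ℝ) × (Fin m → ℝ)) :
    ip A η u (r • w) = r * ip A η u w := by
  rw [ip_symm, ip_smul_left, ip_symm A η w]

lemma ip_zero_left (w : (Fin n → ℝ) × (Fin m → ℝ)) : ip A η 0 w = 0 := by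
  simp [ip]


lemma nrm_neg {k : ℕ} (v : Fin k → ℝ) : nrm (-v) = nrm v := by
  simp [nrm, neg_dotProduct, dotProduct_neg]

lemma nrm_sq {k : ℕ} (v : Fin k → ℝ) : nrm v ^ 2 = v ⬝ᵥ v :=
  Real.sq_sqrt (dot_self_nonneg v)

lemma ip_self_nonneg {A : Matrix (Fin m) (Fin n) ℝ} {η : ℝ} (hη0 : 0 < η)
    (hσ0 : 0 ≤ specNorm A) (hσ : specNorm A ≤ 1 / η)
    (u : (Fin n → ℝ) × (Fin m → ℝ)) : 0 ≤ ip A η u u := by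
  obtain ⟨x, y⟩ := u
  have hcs : (-y) ⬝ᵥ (A *ᵥ x) ≤ nrm y * nrm (A *ᵥ x) := by
    have := dot_CS (-y) (A *ᵥ x)
    rwa [nrm_neg] at this
  have hA := nrm_mulVec_le A hσ0 x
  have hx2 : x ⬝ᵥ x = nrm x ^ 2 := (nrm_sq x).symm
  have hy2 : y ⬝ᵥ y = nrm y ^ 2 := (nrm_sq y).symm
  have hxn := nrm_nonneg x
  have hyn := nrm_nonneg y
  have h1 : y ⬝ᵥ (A *ᵥ x) ≥ -(nrm y * (specNorm A * nrm x)) := by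
    have h2 : nrm y * nrm (A *ᵥ x) ≤ nrm y * (specNorm A * nrm x) :=
      mul_le_mul_of_nonneg_left hA hyn
    have h3 : (-y) ⬝ᵥ (A *ᵥ x) = -(y ⬝ᵥ (A *ᵥ x)) := by
      simp [neg_dotProduct]
    linarith
  show (0:ℝ) ≤ (1/η) * (x ⬝ᵥ x) + y ⬝ᵥ (A *ᵥ x) + y ⬝ᵥ (A *ᵥ x) + (1/η) * (y ⬝ᵥ y)
  rw [hx2, hy2]
  nlinarith [sq_nonneg (nrm x - nrm y), sq_nonneg (nrm x + nrm y),
    mul_nonneg hxn hyn, mul_nonneg (mul_nonneg hσ0 hxn) hyn]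

lemma ip_CS {A : Matrix (Fin m) (Fin n) ℝ} {η : ℝ} (hη0 : 0 < η)
    (hσ0 : 0 ≤ specNorm A) (hσ : specNorm A ≤ 1 / η)
    (u v : (Fin n → ℝ) × (Fin m → ℝ)) :
    ip A η u v ≤ Real.sqrt (ip A η u u) * Real.sqrt (ip A η v v) := by
  have hq : ∀ t : ℝ, 0 ≤ ip A η u u * t ^ 2 + (2 * ip A η u v) * t + ip A η v v := by
    intro t
    have h := ip_self_nonneg hη0 hσ0 hσ (t • u + v)
    have hexp : ip A η (t • u + v) (t • u + v)
        = ip A η u u * t ^ 2 + (2 * ip A η u v) * t + ip A η v v := by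
      simp only [ip_add_left, ip_add_right, ip_smul_left, ip_smul_right, ip_symm A η v u]
      ring
    rwa [hexp] at h
  have hd : discrim (ip A η u u) (2 * ip A η u v) (ip A η v v) ≤ 0 := by
    apply discrim_le_zero
    intro t
    have := hq t
    linarith [hq t]
  rw [discrim] at hd
  have h2 : (ip A η u v) ^ 2 ≤ ip A η u u * ip A η v v := by nlinarith
  calc ip A η u v ≤ |ip A η u v| := le_abs_self _
    _ = Real.sqrt ((ip A η u v) ^ 2) := (Real.sqrt_sq_eq_abs _).symm
    _ ≤ Real.sqrt (ip A η u u * ip A η v v) := Real.sqrt_le_sqrt h2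
    _ = _ := Real.sqrt_mul (ip_self_nonneg hη0 hσ0 hσ u) _

lemma adj1 (A : Matrix (Fin m) (Fin n) ℝ) (u : Fin m → ℝ) (v : Fin n → ℝ) :
    (Aᵀ *ᵥ u) ⬝ᵥ v = u ⬝ᵥ (A *ᵥ v) := by
  rw [Matrix.dotProduct_mulVec, Matrix.mulVec_transpose]

lemma adj2 (A : Matrix (Fin m) (Fin n) ℝ) (u : Fin m → ℝ) (v : Fin n → ℝ) :
    v ⬝ᵥ (Aᵀ *ᵥ u) = (A *ᵥ v) ⬝ᵥ u := by
  rw [dotProduct_comm, adj1, dotProduct_comm]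

lemma core_identity (A : Matrix (Fin m) (Fin n) ℝ) (η : ℝ) (hη : η ≠ 0)
    (x a x' a' : Fin n → ℝ) (y y' b : Fin m → ℝ) (c : Fin n → ℝ) :
    ip A η (((x, y) - (a, y - η • (A *ᵥ ((2:ℝ) • a - x)) + η • b))
          - ((x', y') - (a', y' - η • (A *ᵥ ((2:ℝ) • a' - x')) + η • b)))
        ((a, y - η • (A *ᵥ ((2:ℝ) • a - x)) + η • b)
          - (a', y' - η • (A *ᵥ ((2:ℝ) • a' - x')) + η • b))
    = (1/η) * (((x + η • (Aᵀ *ᵥ y) - η • c) - a) ⬝ᵥ (a - a')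
        + ((x' + η • (Aᵀ *ᵥ y') - η • c) - a') ⬝ᵥ (a' - a)) := by
  simp only [ip, Prod.mk_sub_mk, Prod.fst, Prod.snd,
    Matrix.mulVec_add, Matrix.mulVec_sub, Matrix.mulVec_smul,
    add_dotProduct, sub_dotProduct, smul_dotProduct,
    dotProduct_add, dotProduct_sub, dotProduct_smul,
    smul_eq_mul, adj1, adj2]
  field_simp
  ring_nf
  simp only [dotProduct_comm]
  ring_nf

lemma posPt_nonneg {k : ℕ} (v : Fin k → ℝ) (i : Fin k) : 0 ≤ posPt v i := le_max_right _ _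

lemma proj_ineq {k : ℕ} (v u : Fin k → ℝ) (hu : ∀ i, 0 ≤ u i) :
    (v - posPt v) ⬝ᵥ (u - posPt v) ≤ 0 := by
  apply Finset.sum_nonpos
  intro i _
  simp only [Pi.sub_apply, posPt]
  rcases le_or_gt (v i) 0 with h | h
  · rw [max_eq_right h]
    simpa using mul_nonpos_of_nonpos_of_nonneg (by linarith) (by simpa using hu i)
  · rw [max_eq_left h.le]
    simp

lemma firm (A : Matrix (Fin m) (Fin n) ℝ) (b : Fin m → ℝ) (c : Fin n → ℝ) {η : ℝ}
    (hη0 : 0 < η) (zz ww : (Fin n → ℝ) × (Fin m → ℝ)) :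
    0 ≤ ip A η ((zz - pdhgStep A b c η zz) - (ww - pdhgStep A b c η ww))
      (pdhgStep A b c η zz - pdhgStep A b c η ww) := by
  obtain ⟨x, y⟩ := zz
  obtain ⟨x', y'⟩ := ww
  have hTz : pdhgStep A b c η (x, y)
      = (posPt (x + η • (Aᵀ *ᵥ y) - η • c),
         y - η • (A *ᵥ ((2:ℝ) • posPt (x + η • (Aᵀ *ᵥ y) - η • c) - x)) + η • b) := rfl
  have hTw : pdhgStep A b c η (x', y')
      = (posPt (x' + η • (Aᵀ *ᵥ y') - η • c),
         y' - η • (A *ᵥ ((2:ℝ) • posPt (x' + η • (Aᵀ *ᵥ y') - η • c) - x')) + η • b) := rfl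
  rw [hTz, hTw, core_identity A η (ne_of_gt hη0)]
  have h1 : ((x + η • (Aᵀ *ᵥ y) - η • c) - posPt (x + η • (Aᵀ *ᵥ y) - η • c)) ⬝ᵥ
      (posPt (x' + η • (Aᵀ *ᵥ y') - η • c) - posPt (x + η • (Aᵀ *ᵥ y) - η • c)) ≤ 0 :=
    proj_ineq _ _ (posPt_nonneg _)
  have h2 : ((x' + η • (Aᵀ *ᵥ y') - η • c) - posPt (x' + η • (Aᵀ *ᵥ y') - η • c)) ⬝ᵥ
      (posPt (x + η • (Aᵀ *ᵥ y) - η • c) - posPt (x' + η • (Aᵀ *ᵥ y') - η • c)) ≤ 0 :=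
    proj_ineq _ _ (posPt_nonneg _)
  have e1 : ((x + η • (Aᵀ *ᵥ y) - η • c) - posPt (x + η • (Aᵀ *ᵥ y) - η • c)) ⬝ᵥ
      (posPt (x + η • (Aᵀ *ᵥ y) - η • c) - posPt (x' + η • (Aᵀ *ᵥ y') - η • c))
      = -(((x + η • (Aᵀ *ᵥ y) - η • c) - posPt (x + η • (Aᵀ *ᵥ y) - η • c)) ⬝ᵥ
      (posPt (x' + η • (Aᵀ *ᵥ y') - η • c) - posPt (x + η • (Aᵀ *ᵥ y) - η • c))) := by
    rw [← dotProduct_neg]; congr 1; abel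
  have e2 : ((x' + η • (Aᵀ *ᵥ y') - η • c) - posPt (x' + η • (Aᵀ *ᵥ y') - η • c)) ⬝ᵥ
      (posPt (x' + η • (Aᵀ *ᵥ y') - η • c) - posPt (x + η • (Aᵀ *ᵥ y) - η • c))
      = -(((x' + η • (Aᵀ *ᵥ y') - η • c) - posPt (x' + η • (Aᵀ *ᵥ y') - η • c)) ⬝ᵥ
      (posPt (x + η • (Aᵀ *ᵥ y) - η • c) - posPt (x' + η • (Aᵀ *ᵥ y') - η • c))) := by
    rw [← dotProduct_neg]; congr 1; abel
  have hinv : 0 ≤ 1/η := by positivity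
  apply mul_nonneg hinv
  rw [e1, e2]
  linarith

lemma star (A : Matrix (Fin m) (Fin n) ℝ) (b : Fin m → ℝ) (c : Fin n → ℝ) {η : ℝ}
    (hη0 : 0 < η) (u v : (Fin n → ℝ) × (Fin m → ℝ)) :
    ip A η ((u - pdhgStep A b c η u) - (v - pdhgStep A b c η v))
        ((u - pdhgStep A b c η u) - (v - pdhgStep A b c η v))
      ≤ ip A η (u - v) ((u - pdhgStep A b c η u) - (v - pdhgStep A b c η v)) := by
  have h := firm A b c hη0 u v
  have hT : pdhgStep A b c η u - pdhgStep A b c η v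
      = (u - v) - ((u - pdhgStep A b c η u) - (v - pdhgStep A b c η v)) := by abel
  rw [hT, ip_sub_right] at h
  rw [ip_symm A η (u - v) ((u - pdhgStep A b c η u) - (v - pdhgStep A b c η v))]
  linarith

lemma ip_self_eq_Pquad (A : Matrix (Fin m) (Fin n) ℝ) (η : ℝ)
    (w : (Fin n → ℝ) × (Fin m → ℝ)) : ip A η w w = Pquad A η w := by
  simp [ip, Pquad]; ring

lemma Pnorm_eq (A : Matrix (Fin m) (Fin n) ℝ) (η : ℝ) (w : (Fin n → ℝ) × (Fin m → ℝ)) :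
    Pnorm A η w = Real.sqrt (ip A η w w) := by
  rw [Pnorm, ip_self_eq_Pquad]

end S9
end

/-- reflected Halpern PDHG,
`zᵏ⁺¹ = ((k+1)/(k+2))·(2·PDHG(zᵏ) − zᵏ) + (1/(k+2))·z⁰`, with `η < 1/‖A‖₂` and
nonempty fixed-point set `Z*`, satisfies
`‖zᵏ − PDHG(zᵏ)‖_P ≤ (1/(k+1))·dist_P(z⁰, Z*)` for every `k ≥ 1`. -/
theorem stmt9 {n m : ℕ} (A : Matrix (Fin m) (Fin n) ℝ) (b : Fin m → ℝ) (c : Fin n → ℝ)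
    (η : ℝ) (hη0 : 0 < η) (hη : η < 1 / specNorm A)
    (z : ℕ → (Fin n → ℝ) × (Fin m → ℝ))
    (hiter : ∀ k : ℕ, z (k + 1) =
      (((k : ℝ) + 1) / ((k : ℝ) + 2)) • ((2 : ℝ) • pdhgStep A b c η (z k) - z k)
        + (1 / ((k : ℝ) + 2)) • z 0)
    (hfix : {w : (Fin n → ℝ) × (Fin m → ℝ) | pdhgStep A b c η w = w}.Nonempty) :
    ∀ k : ℕ, 1 ≤ k →
      Pnorm A η (z k - pdhgStep A b c η (z k)) ≤
        (1 / ((k : ℝ) + 1)) *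
          distP A η (z 0) {w : (Fin n → ℝ) × (Fin m → ℝ) | pdhgStep A b c η w = w} := by
  have hσpos : 0 < specNorm A := by
    by_contra h
    push_neg at h
    have h1 : 1 / specNorm A ≤ 0 := one_div_nonpos.mpr h
    linarith
  have hσ0 : (0:ℝ) ≤ specNorm A := hσpos.le
  have hσ : specNorm A ≤ 1 / η := by
    have h1 : η * specNorm A < 1 := (lt_div_iff₀ hσpos).mp hη
    have h1' : specNorm A * η < 1 := by rwa [mul_comm] at h1
    exact ((lt_div_iff₀ hη0).mpr h1').le
  set T := pdhgStep A b c η with hTdef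
  -- the Halpern potential invariant
  have hinv : ∀ j : ℕ, (j:ℝ) * S9.ip A η (z j - T (z j)) (z j - T (z j))
      ≤ S9.ip A η (z j - T (z j)) (z 0 - z j) := by
    intro j
    induction j with
    | zero =>
      rw [sub_self]
      simp [S9.ip]
    | succ k ih =>
      have hk2 : (0:ℝ) < (k:ℝ) + 2 := by positivity
      have hk1 : (0:ℝ) ≤ (k:ℝ) + 1 := by positivity
      have hv1 : ((k:ℝ)+2) • (z (k+1) - z k)
          = (-(2*((k:ℝ)+1))) • (z k - T (z k)) + (z 0 - z k) := by
        rw [hiter k]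
        match_scalars <;> field_simp <;> ring
      have hv2 : ((k:ℝ)+2) • (z 0 - z (k+1))
          = ((k:ℝ)+1) • ((z 0 - z k) + (2:ℝ) • (z k - T (z k))) := by
        rw [hiter k]
        match_scalars <;> field_simp <;> ring
      set E' := z (k+1) - T (z (k+1)) with hE1
      set E := z k - T (z k) with hE0
      set d := z 0 - z k with hd
      have hstar := S9.star A b c hη0 (z (k+1)) (z k)
      simp only [← hTdef] at hstar
      rw [← hE0] at hstar
      have h5 : ((k:ℝ)+2) * S9.ip A η (E' - E) (E' - E)
          ≤ S9.ip A η ((-(2*((k:ℝ)+1))) • E + d) (E' - E) := by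
        have h4 := mul_le_mul_of_nonneg_left hstar hk2.le
        calc ((k:ℝ)+2) * S9.ip A η (E' - E) (E' - E)
            ≤ ((k:ℝ)+2) * S9.ip A η (z (k+1) - z k) (E' - E) := h4
          _ = S9.ip A η (((k:ℝ)+2) • (z (k+1) - z k)) (E' - E) :=
              (S9.ip_smul_left A η _ _ _).symm
          _ = _ := by rw [hv1]
      have hw2s : ((k:ℝ)+2) * S9.ip A η E' E'
          ≤ S9.ip A η E' d + 2 * S9.ip A η E' E := by
        simp only [S9.ip_add_left, S9.ip_sub_left, S9.ip_smul_left,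
          S9.ip_add_right, S9.ip_sub_right, S9.ip_smul_right] at h5 ih ⊢
        simp only [S9.ip_symm A η E E', S9.ip_symm A η d E', S9.ip_symm A η d E] at h5 ih ⊢
        ring_nf at h5 ih ⊢
        linarith
      -- conclude the step
      have h6 : ((k:ℝ)+2) * (((k:ℝ)+1) * S9.ip A η E' E')
          ≤ ((k:ℝ)+2) * S9.ip A η E' (z 0 - z (k+1)) := by
        have h7 : ((k:ℝ)+2) * S9.ip A η E' (z 0 - z (k+1))
            = ((k:ℝ)+1) * (S9.ip A η E' d + 2 * S9.ip A η E' E) := by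
          rw [← S9.ip_smul_right, hv2, S9.ip_smul_right, S9.ip_add_right, S9.ip_smul_right]
        rw [h7]
        have h8 := mul_le_mul_of_nonneg_left hw2s hk1
        nlinarith [h8]
      have h9 := le_of_mul_le_mul_left h6 hk2
      push_cast
      exact h9
  -- the per-fixed-point bound
  have core : ∀ ws ∈ {w : (Fin n → ℝ) × (Fin m → ℝ) | T w = w},
      ∀ j : ℕ, ((j:ℝ)+1) * Pnorm A η (z j - T (z j)) ≤ Pnorm A η (z 0 - ws) := by
    intro ws hws j
    have hws' : T ws = ws := hws
    have hes : ws - T ws = 0 := by rw [hws', sub_self]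
    have hstar := S9.star A b c hη0 (z j) ws
    rw [hes, sub_zero] at hstar
    have hsplit : z 0 - ws = (z 0 - z j) + (z j - ws) := by abel
    have hlow : ((j:ℝ)+1) * S9.ip A η (z j - T (z j)) (z j - T (z j))
        ≤ S9.ip A η (z j - T (z j)) (z 0 - ws) := by
      rw [hsplit, S9.ip_add_right]
      have h2 := hinv j
      have h3 : S9.ip A η (z j - ws) (z j - T (z j))
          = S9.ip A η (z j - T (z j)) (z j - ws) := S9.ip_symm A η _ _
      rw [h3] at hstar
      linarith
    have hcs := S9.ip_CS hη0 hσ0 hσ (z j - T (z j)) (z 0 - ws)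
    have hp0 : 0 ≤ S9.ip A η (z j - T (z j)) (z j - T (z j)) :=
      S9.ip_self_nonneg hη0 hσ0 hσ _
    rw [S9.Pnorm_eq, S9.Pnorm_eq]
    have hNsq : S9.ip A η (z j - T (z j)) (z j - T (z j))
        = Real.sqrt (S9.ip A η (z j - T (z j)) (z j - T (z j))) ^ 2 :=
      (Real.sq_sqrt hp0).symm
    have hD0 : 0 ≤ Real.sqrt (S9.ip A η (z 0 - ws) (z 0 - ws)) := Real.sqrt_nonneg _
    rcases (Real.sqrt_nonneg (S9.ip A η (z j - T (z j)) (z j - T (z j)))).eq_or_lt with h0 | h0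
    · rw [← h0, mul_zero]
      exact hD0
    · refine le_of_mul_le_mul_right ?_ h0
      nlinarith [hlow, hcs, hNsq]
  -- conclude via the infimum
  intro k _
  have hk1 : (0:ℝ) < (k:ℝ) + 1 := by positivity
  rw [distP]
  have hlb : ((k:ℝ)+1) * Pnorm A η (z k - T (z k))
      ≤ sInf ((fun w => Pnorm A η (z 0 - w)) '' {w : (Fin n → ℝ) × (Fin m → ℝ) | T w = w}) := by
    apply le_csInf (hfix.image _)
    rintro r ⟨ws, hws, rfl⟩
    exact core ws hws k
  have h2 : Pnorm A η (z k - T (z k))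
      ≤ sInf ((fun w => Pnorm A η (z 0 - w)) '' {w : (Fin n → ℝ) × (Fin m → ℝ) | T w = w})
        / ((k:ℝ)+1) := by
    rw [le_div_iff₀ hk1]
    nlinarith [hlb]
  have h3 : sInf ((fun w => Pnorm A η (z 0 - w)) '' {w : (Fin n → ℝ) × (Fin m → ℝ) | T w = w})
        / ((k:ℝ)+1)
      = (1/((k:ℝ)+1)) * sInf ((fun w => Pnorm A η (z 0 - w)) ''
          {w : (Fin n → ℝ) × (Fin m → ℝ) | T w = w}) := by ring
  rw [h3] at h2
  exact h2
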